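/- (Energy asymptotics of the quasi-mode as b → 0⁺) Let m ≥ 1 be an integer, ν ∈ (−1/2, 1/2], and set a = m − ν. With χ(r) = 1 + ((a − b/2)/(a + b/2))·r^{−2a} and f(r) = r^{a}·e^{−b·r²/4}, there exist constants C > 0 and b₀ > 0 such that for all 0 < b < b₀: | b·∫₁^∞ r²·χ'(r)·χ(r)·f(r)² dr + 2a | ≤ C·√b. -/

import Mathlib

open MeasureTheory Filter Set

private lemma qm_hasDeriv (b : ℝ) (hb : 0 < b) (x : ℝ) :
    HasDerivAt (fun r : ℝ => -(Real.exp (-(b/2) * r^2) / b))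
      (x * Real.exp (-(b/2) * x^2)) x := by
  have hx2 : HasDerivAt (fun r : ℝ => -(b/2) * r^2) (-(b/2) * (2*x)) x := by
    simpa using (hasDerivAt_pow 2 x).const_mul (-(b/2))
  have h := ((hx2.exp).div_const b).neg
  refine h.congr_deriv ?_
  rw [← neg_div, div_eq_iff hb.ne']
  ring

private lemma qm_tendsto (b : ℝ) (hb : 0 < b) :
    Tendsto (fun r : ℝ => -(Real.exp (-(b/2) * r^2) / b)) atTop (nhds 0) := by
  have h2 : Tendsto (fun r : ℝ => (b/2) * r^2) atTop atTop :=
    (tendsto_pow_atTop two_ne_zero).const_mul_atTop (half_pos hb)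
  have h1 : Tendsto (fun r : ℝ => -(b/2) * r^2) atTop atBot := by
    have := tendsto_neg_atBot_iff.mpr h2
    simpa [neg_mul] using this
  have h3 := (Real.tendsto_exp_atBot).comp h1
  have h4 := (h3.div_const b).neg
  simpa using h4

private lemma qm_I1_int (b : ℝ) (hb : 0 < b) :
    IntegrableOn (fun r : ℝ => r * Real.exp (-(b/2) * r^2)) (Set.Ioi 1) := by
  refine integrableOn_Ioi_deriv_of_nonneg' (fun x _ => qm_hasDeriv b hb x)
    (fun x hx => ?_) (qm_tendsto b hb)
  have : (0:ℝ) < x := lt_trans one_pos hx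
  positivity

private lemma qm_I1_eq (b : ℝ) (hb : 0 < b) :
    ∫ r in Set.Ioi (1:ℝ), r * Real.exp (-(b/2) * r^2) = Real.exp (-(b/2)) / b := by
  have h := integral_Ioi_of_hasDerivAt_of_nonneg' (fun x _ => qm_hasDeriv b hb x)
    (fun x hx => by
      have : (0:ℝ) < x := lt_trans one_pos hx
      positivity) (qm_tendsto b hb)
  rw [h]
  norm_num

set_option maxHeartbeats 1000000 in
/-- Energy asymptotics of the quasi-mode as `b → 0⁺`: with `a = m − ν`, `m ≥ 1`,
`⟨(𝓛^{(m)} − b)Ψ, Ψ⟩ = b·∫₁^∞ r² χ'(r) χ(r) f(r)² dr = −2a + O(√b)`. -/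
theorem quasi_mode_energy_asymptotics
    (m : ℤ) (hm : 1 ≤ m) (ν : ℝ) (hν : ν ∈ Set.Ioc (-(1:ℝ)/2) (1/2))
    (a : ℝ) (ha : a = (m : ℝ) - ν) :
    ∃ C > (0:ℝ), ∃ b₀ > (0:ℝ), ∀ b : ℝ, 0 < b → b < b₀ →
      |b * (∫ r in Set.Ioi (1:ℝ),
          r ^ 2 * deriv (fun s : ℝ => 1 + (a - b / 2) / (a + b / 2) * s ^ (-(2 * a))) r *
            (1 + (a - b / 2) / (a + b / 2) * r ^ (-(2 * a))) *
            (r ^ a * Real.exp (-b * r ^ 2 / 4)) ^ 2)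
        + 2 * a| ≤ C * Real.sqrt b := by
  obtain ⟨hν1, hν2⟩ := hν
  have hm1 : (1:ℝ) ≤ (m:ℝ) := by exact_mod_cast hm
  have ha0 : (1:ℝ)/2 ≤ a := by rw [ha]; linarith
  refine ⟨12 * a, by linarith, 1, one_pos, ?_⟩
  intro b hb hb1
  set κ : ℝ := (a - b / 2) / (a + b / 2) with hκdef
  have hden : 0 < a + b / 2 := by linarith
  have hnum : 0 < a - b / 2 := by linarith
  have hκ0 : 0 < κ := div_pos hnum hden
  have hκ1 : κ ≤ 1 := by rw [hκdef, div_le_one hden]; linarith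
  set E : ℝ → ℝ := fun r => Real.exp (-(b/2) * r^2) with hEdef
  -- Step 1: rewrite the integrand
  have hcong : ∀ r ∈ Set.Ioi (1:ℝ),
      r ^ 2 * deriv (fun s : ℝ => 1 + κ * s ^ (-(2 * a))) r *
          (1 + κ * r ^ (-(2 * a))) * (r ^ a * Real.exp (-b * r ^ 2 / 4)) ^ 2
      = (-(2 * a * κ)) * (r * E r)
        + (-(2 * a * κ^2)) * (r ^ (1 - 2*a) * E r) := by
    intro r hr
    have hr1 : (1:ℝ) < r := hr
    have hr0 : (0:ℝ) < r := lt_trans one_pos hr1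
    -- derivative
    have hd : HasDerivAt (fun s : ℝ => 1 + κ * s ^ (-(2 * a)))
        (κ * (-(2 * a) * r ^ (-(2 * a) - 1))) r := by
      have h0 := Real.hasDerivAt_rpow_const (x := r) (p := -(2 * a)) (Or.inl hr0.ne')
      exact (h0.const_mul κ).const_add 1
    rw [hd.deriv]
    -- rpow facts
    have hu : 0 < r ^ a := Real.rpow_pos_of_pos hr0 a
    have hA : (r ^ a) ^ 2 = r ^ (2 * a) := by
      rw [sq, ← Real.rpow_add hr0]; ring_nf
    have h2 : r ^ (-(2 * a)) = ((r ^ a) ^ 2)⁻¹ := by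
      rw [hA, ← Real.rpow_neg hr0.le]
    have h1 : r ^ (-(2 * a) - 1) = ((r ^ a) ^ 2 * r)⁻¹ := by
      rw [hA, show -(2*a) - 1 = -(2*a + 1) by ring, Real.rpow_neg hr0.le,
        Real.rpow_add hr0, Real.rpow_one]
    have h3 : r ^ (1 - 2 * a) = r * ((r ^ a) ^ 2)⁻¹ := by
      rw [hA, show 1 - 2*a = 1 + -(2*a) by ring, Real.rpow_add hr0, Real.rpow_one,
        Real.rpow_neg hr0.le]
    have hE2 : Real.exp (-b * r ^ 2 / 4) ^ 2 = E r := by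
      rw [sq, ← Real.exp_add, hEdef]
      congr 1
      ring
    rw [mul_pow, hE2, h1, h2, h3]
    field_simp
    ring
  rw [setIntegral_congr_fun measurableSet_Ioi hcong]
  -- Step 2: integrability
  have hEglob : Integrable E := by
    simpa [hEdef] using integrable_exp_neg_mul_sq (show (0:ℝ) < b/2 by linarith)
  have hEint : IntegrableOn E (Set.Ioi 1) := hEglob.integrableOn
  have hI1int : IntegrableOn (fun r : ℝ => r * E r) (Set.Ioi 1) := qm_I1_int b hb
  have hI2meas : AEStronglyMeasurable (fun r : ℝ => r ^ (1 - 2*a) * E r)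
      (volume.restrict (Set.Ioi 1)) := by
    apply Measurable.aestronglyMeasurable
    fun_prop
  have hI2int : IntegrableOn (fun r : ℝ => r ^ (1 - 2*a) * E r) (Set.Ioi 1) := by
    refine Integrable.mono hEint hI2meas ?_
    rw [ae_restrict_iff' measurableSet_Ioi]
    filter_upwards with r
    intro hr
    have hr1 : (1:ℝ) < r := hr
    have hE0 : 0 < E r := Real.exp_pos _
    have hrp : r ^ (1 - 2*a) ≤ 1 :=
      Real.rpow_le_one_of_one_le_of_nonpos hr1.le (by linarith)
    have hrp0 : 0 ≤ r ^ (1 - 2*a) := Real.rpow_nonneg (by linarith) _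
    rw [Real.norm_eq_abs, Real.norm_eq_abs, abs_of_nonneg (by positivity),
      abs_of_nonneg hE0.le]
    nlinarith
  -- split the integral
  rw [integral_add (hI1int.const_mul _) (hI2int.const_mul _), integral_const_mul,
    integral_const_mul, qm_I1_eq b hb]
  set J : ℝ := ∫ r in Set.Ioi (1:ℝ), r ^ (1 - 2*a) * E r with hJdef
  -- bounds on J
  have hJ0 : 0 ≤ J := by
    refine setIntegral_nonneg measurableSet_Ioi (fun r hr => ?_)
    have hr1 : (1:ℝ) < r := hr
    have : (0:ℝ) < r := lt_trans one_pos hr1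
    positivity
  have hJle : J ≤ Real.sqrt (Real.pi / (b/2)) := by
    have step1 : J ≤ ∫ r in Set.Ioi (1:ℝ), E r := by
      refine setIntegral_mono_on hI2int hEint measurableSet_Ioi (fun r hr => ?_)
      have hr1 : (1:ℝ) < r := hr
      have hE0 : 0 < E r := Real.exp_pos _
      have hrp : r ^ (1 - 2*a) ≤ 1 :=
        Real.rpow_le_one_of_one_le_of_nonpos hr1.le (by linarith)
      nlinarith
    have step2 : (∫ r in Set.Ioi (1:ℝ), E r) ≤ ∫ r : ℝ, E r :=
      setIntegral_le_integral hEglob (Filter.Eventually.of_forall fun r => (Real.exp_pos _).le)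
    have step3 : (∫ r : ℝ, E r) = Real.sqrt (Real.pi / (b/2)) := by
      simpa [hEdef] using integral_gaussian (b/2)
    linarith [step1, step2, step3.le]
  -- √b facts
  have hsb0 : 0 < Real.sqrt b := Real.sqrt_pos.mpr hb
  have hbsb : b ≤ Real.sqrt b := by
    nlinarith [Real.sq_sqrt hb.le, Real.sqrt_le_one.mpr hb1.le, Real.sqrt_nonneg b]
  -- bound b * J
  have hbJ : b * J ≤ 3 * Real.sqrt b := by
    set s := Real.sqrt (Real.pi / (b/2)) with hs
    have hs0 : 0 ≤ s := Real.sqrt_nonneg _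
    have hs2 : s^2 = Real.pi/(b/2) := Real.sq_sqrt (by positivity)
    have ht2 : (Real.sqrt b)^2 = b := Real.sq_sqrt hb.le
    have hpi : Real.pi ≤ 4 := Real.pi_le_four
    have e : (b*s)^2 = 2*Real.pi*b := by
      rw [mul_pow, hs2]
      field_simp
    have key : (b * s)^2 ≤ (3 * Real.sqrt b)^2 := by
      rw [e, mul_pow, ht2]
      nlinarith
    have h1 : b * s ≤ 3 * Real.sqrt b := by
      have h2 := Real.sqrt_le_sqrt key
      rwa [Real.sqrt_sq (by positivity), Real.sqrt_sq (by positivity)] at h2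
    calc b * J ≤ b * s := mul_le_mul_of_nonneg_left hJle hb.le
      _ ≤ 3 * Real.sqrt b := h1
  -- final arithmetic
  have hexp1 : Real.exp (-(b/2)) ≤ 1 := Real.exp_le_one_iff.mpr (by linarith)
  have hexp2 : 1 - b/2 ≤ Real.exp (-(b/2)) := by
    have := Real.add_one_le_exp (-(b/2)); linarith
  have hexp0 : (0:ℝ) < Real.exp (-(b/2)) := Real.exp_pos _
  set t : ℝ := Real.exp (-(b/2)) with htdef
  have hsimp : b * ((-(2*a*κ)) * (t/b) + (-(2*a*κ^2)) * J) + 2*a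
      = 2*a*(1 - κ*t) - 2*a*κ^2*(b*J) := by
    field_simp
    ring
  rw [hsimp]
  clear_value κ t J
  have h1κ : 1 - κ ≤ 2*b := by
    have e : 1 - κ = b / (a + b/2) := by
      rw [hκdef]; field_simp; ring
    rw [e, div_le_iff₀ hden]
    nlinarith
  have hq1 : 0 ≤ 1 - κ*t := by nlinarith
  have hq2 : 1 - κ*t ≤ 3*b := by nlinarith
  have hq2' : 1 - κ*t ≤ 3*Real.sqrt b := by linarith
  have hκsq : κ^2 ≤ 1 := by nlinarith
  have hbJ0 : 0 ≤ b * J := mul_nonneg hb.le hJ0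
  rw [abs_le]
  constructor
  · nlinarith [mul_nonneg (mul_nonneg (by linarith : (0:ℝ) ≤ 2*a) (sq_nonneg κ)) hbJ0,
      mul_le_mul_of_nonneg_left hbJ (by linarith : (0:ℝ) ≤ 2*a),
      mul_nonneg (by linarith : (0:ℝ) ≤ 2*a) hq1,
      mul_le_mul_of_nonneg_left hκsq hbJ0]
  · nlinarith [mul_le_mul_of_nonneg_left hq2' (by linarith : (0:ℝ) ≤ 2*a),
      mul_nonneg (mul_nonneg (by linarith : (0:ℝ) ≤ 2*a) (sq_nonneg κ)) hbJ0,
      mul_nonneg (by linarith : (0:ℝ) ≤ 2*a) hq1]
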